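/- Let ε ∈ (0,1), Δ > 0, and T > 0 with T·Δ² ≥ 1; write L = log(T·Δ²). Let Z₁, Z₂, … be i.i.d. real random variables such that Zᵢ − Δ′ is 1-subgaussian for some constant Δ′ ≥ (1−ε)Δ, and let S′ₙ = Z₁ + ⋯ + Zₙ. Then for every x > 0, with n_x = (L + x)/(2(1−ε)²Δ²), one has P(S′_{⌈n_x⌉} ≤ L/(2(1−ε)Δ)) ≤ exp(−x²/(4(L + x))). -/

import Mathlib

open MeasureTheory ProbabilityTheory Real
open scoped ENNReal

/-- `W` is 1-subgaussian (mean-zero form): `E[exp(λW)] ≤ exp(λ²/2)` for all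
`λ ∈ ℝ` (with the integrability of the moment generating function). -/
def IsOneSubgaussianMGF {Ω : Type*} [MeasurableSpace Ω] (μ : Measure Ω) (W : Ω → ℝ) : Prop :=
  ∀ l : ℝ, Integrable (fun ω => Real.exp (l * W ω)) μ ∧
    (∫ ω, Real.exp (l * W ω) ∂μ) ≤ Real.exp (l ^ 2 / 2)

set_option maxHeartbeats 1000000 in
/-- Let `ε ∈ (0,1)`, `Δ > 0`, `T > 0`, `T·Δ² ≥ 1`, `L = log(T·Δ²)`.  Let `Z₁, Z₂, …` be
i.i.d. with `Zᵢ − Δ′` 1-subgaussian for some constant `Δ′ ≥ (1−ε)Δ`, and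
`S′ₙ = Z₁ + ⋯ + Zₙ`.  For every `x > 0`, with `n_x = (L + x)/(2(1−ε)²Δ²)`,
`P(S′_{⌈n_x⌉} ≤ L/(2(1−ε)Δ)) ≤ exp(−x²/(4(L + x)))`. -/
theorem stmt7 {Ω : Type*} [MeasurableSpace Ω] (μ : Measure Ω) [IsProbabilityMeasure μ]
    (Z : ℕ → Ω → ℝ) (hmeas : ∀ i, Measurable (Z i))
    (hindep : iIndepFun Z μ)
    (hident : ∀ i, IdentDistrib (Z i) (Z 0) μ μ)
    (ε Δ T : ℝ) (hε : ε ∈ Set.Ioo (0 : ℝ) 1) (hΔ : 0 < Δ) (hT : 0 < T)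
    (hTΔ : 1 ≤ T * Δ ^ 2)
    (Δ' : ℝ) (hΔ' : (1 - ε) * Δ ≤ Δ')
    (hsub : ∀ i, IsOneSubgaussianMGF μ (fun ω => Z i ω - Δ'))
    (L : ℝ) (hL : L = Real.log (T * Δ ^ 2))
    (x : ℝ) (hx : 0 < x) :
    μ {ω | ∑ i ∈ Finset.range ⌈(L + x) / (2 * (1 - ε) ^ 2 * Δ ^ 2)⌉₊, Z i ω
        ≤ L / (2 * (1 - ε) * Δ)} ≤
      ENNReal.ofReal (Real.exp (-(x ^ 2) / (4 * (L + x)))) := by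
  obtain ⟨hε0, hε1⟩ := hε
  set a : ℝ := (1 - ε) * Δ with ha_def
  have ha : 0 < a := mul_pos (by linarith) hΔ
  have hL0 : 0 ≤ L := hL ▸ Real.log_nonneg hTΔ
  have hLx : 0 < L + x := by linarith
  set n : ℕ := ⌈(L + x) / (2 * (1 - ε) ^ 2 * Δ ^ 2)⌉₊ with hn_def
  set N : ℝ := (n : ℝ) with hN_def
  have h2a2 : 2 * (1 - ε) ^ 2 * Δ ^ 2 = 2 * a ^ 2 := by rw [ha_def]; ring
  have hNge : (L + x) / (2 * a ^ 2) ≤ N := by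
    rw [← h2a2]; exact Nat.le_ceil _
  have h1 : L + x ≤ N * (2 * a ^ 2) := (div_le_iff₀ (by positivity)).mp hNge
  have hden : 0 < 2 * (1 - ε) ^ 2 * Δ ^ 2 := by rw [h2a2]; positivity
  have hN_pos : 0 < N := by
    rw [hN_def]
    exact_mod_cast Nat.ceil_pos.mpr (div_pos hLx hden)
  set c : ℝ := L / (2 * (1 - ε) * Δ) with hc_def
  have hc : c = L / (2 * a) := by rw [hc_def, ha_def]; ring_nf
  -- the optimal (negative) Chernoff parameter
  set lam : ℝ := (N * a - L / (2 * a)) / N with hlam_def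
  have hNa : L / (2 * a) + x / (2 * a) ≤ N * a := by
    rw [← add_div, div_le_iff₀ (by positivity)]
    nlinarith
  have hlam_pos : 0 < lam := by
    apply div_pos _ hN_pos
    have : 0 < x / (2 * a) := by positivity
    linarith
  set W : ℕ → Ω → ℝ := fun i ω => Z i ω - Δ' with hW_def
  have hWmeas : ∀ i, Measurable (W i) := fun i => (hmeas i).sub measurable_const
  have hWindep : iIndepFun W μ := by
    have := hindep.comp (fun _ => fun y : ℝ => y - Δ')
      (fun _ => measurable_id.sub measurable_const)
    exact this
  have hint : ∀ i ∈ Finset.range n,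
      Integrable (fun ω => Real.exp ((-lam) * W i ω)) μ := fun i _ => (hsub i (-lam)).1
  have hintsum : Integrable (fun ω => Real.exp ((-lam) * (∑ i ∈ Finset.range n, W i) ω)) μ :=
    hWindep.integrable_exp_mul_sum hWmeas hint
  -- subset step
  have hsubset : {ω | ∑ i ∈ Finset.range n, Z i ω ≤ c}
      ⊆ {ω | (∑ i ∈ Finset.range n, W i) ω ≤ c - N * Δ'} := by
    intro ω hω
    simp only [Set.mem_setOf_eq, Finset.sum_apply] at *
    have heq : ∑ i ∈ Finset.range n, W i ω = (∑ i ∈ Finset.range n, Z i ω) - N * Δ' := by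
      unfold W N
      rw [Finset.sum_sub_distrib, Finset.sum_const, Finset.card_range, nsmul_eq_mul]
    rw [heq]
    linarith
  -- Chernoff
  have hcher := measure_le_le_exp_mul_mgf (μ := μ) (X := ∑ i ∈ Finset.range n, W i)
    (c - N * Δ') (neg_nonpos.mpr hlam_pos.le) hintsum
  -- bound the mgf
  have hmgf : mgf (∑ i ∈ Finset.range n, W i) μ (-lam) ≤ Real.exp (N * lam ^ 2 / 2) := by
    rw [hWindep.mgf_sum hWmeas]
    calc ∏ i ∈ Finset.range n, mgf (W i) μ (-lam)
        ≤ ∏ _i ∈ Finset.range n, Real.exp ((-lam) ^ 2 / 2) :=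
          Finset.prod_le_prod (fun i _ => mgf_nonneg) (fun i _ => (hsub i (-lam)).2)
      _ = Real.exp (N * lam ^ 2 / 2) := by
          rw [Finset.prod_const, Finset.card_range, ← Real.exp_nat_mul]
          rw [hN_def]; ring_nf
  have hfinal : Real.exp (-(-lam) * (c - N * Δ')) * Real.exp (N * lam ^ 2 / 2)
      ≤ Real.exp (-(x ^ 2) / (4 * (L + x))) := by
    rw [← Real.exp_add, Real.exp_le_exp]
    have hNlam : N * lam = N * a - L / (2 * a) := by
      rw [hlam_def]; field_simp
    have hb : c - N * Δ' ≤ c - N * a := by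
      nlinarith [mul_le_mul_of_nonneg_left hΔ' hN_pos.le]
    have h2 : lam * (c - N * Δ') ≤ lam * (c - N * a) :=
      mul_le_mul_of_nonneg_left hb hlam_pos.le
    have h3 : lam * (c - N * a) + N * lam ^ 2 / 2 = -(N * lam ^ 2 / 2) := by
      linear_combination lam * hNlam + lam * hc
    have h4 : x ^ 2 / (4 * (L + x)) ≤ N * lam ^ 2 / 2 := by
      set u : ℝ := 2 * a ^ 2 * N with hu_def
      have hu : L + x ≤ u := by rw [hu_def]; linarith [h1]
      have hupos : 0 < u := lt_of_lt_of_le hLx hu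
      have hval : N * lam ^ 2 / 2 = (u - L) ^ 2 / (4 * u) := by
        rw [hlam_def, hu_def]
        field_simp
        ring
      rw [hval, div_le_div_iff₀ (by positivity) (by positivity)]
      have hd : 0 ≤ u - (L + x) := sub_nonneg.mpr hu
      nlinarith [mul_nonneg hd (mul_nonneg hx.le hL0),
        mul_nonneg (mul_nonneg hd hd) hLx.le, mul_nonneg hd (sq_nonneg x)]
    calc -(-lam) * (c - N * Δ') + N * lam ^ 2 / 2
        ≤ lam * (c - N * a) + N * lam ^ 2 / 2 := by rw [neg_neg]; linarith
      _ = -(N * lam ^ 2 / 2) := h3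
      _ ≤ -(x ^ 2) / (4 * (L + x)) := by rw [neg_div]; linarith
  -- assemble
  calc μ {ω | ∑ i ∈ Finset.range n, Z i ω ≤ c}
      ≤ μ {ω | (∑ i ∈ Finset.range n, W i) ω ≤ c - N * Δ'} := measure_mono hsubset
    _ = ENNReal.ofReal ((μ {ω | (∑ i ∈ Finset.range n, W i) ω ≤ c - N * Δ'}).toReal) :=
        (ENNReal.ofReal_toReal (measure_ne_top _ _)).symm
    _ ≤ ENNReal.ofReal (Real.exp (-(x ^ 2) / (4 * (L + x)))) := by
        apply ENNReal.ofReal_le_ofReal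
        refine hcher.trans ?_
        calc Real.exp (-(-lam) * (c - N * Δ')) * mgf (∑ i ∈ Finset.range n, W i) μ (-lam)
            ≤ Real.exp (-(-lam) * (c - N * Δ')) * Real.exp (N * lam ^ 2 / 2) := by
              exact mul_le_mul_of_nonneg_left hmgf (Real.exp_pos _).le
          _ ≤ _ := hfinal
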